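/- Let A : ℕ → ℕ be defined by A(0) = 1, A(1) = 2, and A(n) = 1 + C(A(n−2)+1, 2) + A(n−2)·(A(n−1) − A(n−2)) for n ≥ 2, and let φ = (1+√5)/2. Then (log(log A(n)))/n tends to log φ as n → ∞, i.e., A(n) grows doubly exponentially in n with inner base the golden ratio. -/

import Mathlib

open Filter

def A : ℕ → ℕ
  | 0 => 1
  | 1 => 2
  | n + 2 => 1 + Nat.choose (A n + 1) 2 + A n * (A (n + 1) - A n)

lemma A_pos (n : ℕ) : 1 ≤ A n := by
  match n with
  | 0 => simp [A]
  | 1 => simp [A]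
  | n + 2 => show 1 ≤ 1 + Nat.choose (A n + 1) 2 + A n * (A (n + 1) - A n); omega

lemma two_mul_choose (m : ℕ) : 2 * Nat.choose (m + 1) 2 = m * m + m := by
  induction m with
  | zero => decide
  | succ k ih =>
    show 2 * Nat.choose (k + 2) 2 = (k + 1) * (k + 1) + (k + 1)
    have h : Nat.choose (k + 2) 2 = (k + 1) + Nat.choose (k + 1) 2 := by
      rw [Nat.choose_succ_succ]
      simp [Nat.choose_one_right]
    have h2 : (k + 1) * (k + 1) = k * k + 2 * k + 1 := by ring
    omega

lemma A_mono (n : ℕ) : A n < A (n + 1) := by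
  induction n with
  | zero => decide
  | succ k ih =>
    show A (k + 1) < A (k + 2)
    have h1 : 1 ≤ A k := A_pos k
    have h2 : 2 * Nat.choose (A k + 1) 2 = A k * A k + A k := two_mul_choose (A k)
    have h3 : A k ≤ A k * A k := Nat.le_mul_of_pos_left _ h1
    have h4 : A (k + 1) - A k ≤ A k * (A (k + 1) - A k) := Nat.le_mul_of_pos_left _ h1
    have h5 : A (k + 2) = 1 + Nat.choose (A k + 1) 2 + A k * (A (k + 1) - A k) := rfl
    omega

lemma key_eq (n : ℕ) : 2 * A (n + 2) = 2 + (A n * A n + A n) + 2 * (A n * (A (n + 1) - A n)) := by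
  have h5 : A (n + 2) = 1 + Nat.choose (A n + 1) 2 + A n * (A (n + 1) - A n) := rfl
  have h2 := two_mul_choose (A n)
  omega

lemma sub_eq (n : ℕ) : A n * (A (n + 1) - A n) + A n * A n = A n * A (n + 1) := by
  rw [← Nat.mul_add, Nat.sub_add_cancel (A_mono n).le]

lemma lower_key (n : ℕ) : A n * A (n + 1) ≤ 2 * A (n + 2) := by
  have h1 := key_eq n
  have h2 := sub_eq n
  have h3 : A n * A n ≤ A n * A (n + 1) := Nat.mul_le_mul_left _ (A_mono n).le
  omega

lemma upper_key (n : ℕ) : A (n + 2) ≤ 3 * (A n * A (n + 1)) := by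
  have h1 := key_eq n
  have h2 := sub_eq n
  have h3 : A n * A n ≤ A n * A (n + 1) := Nat.mul_le_mul_left _ (A_mono n).le
  have hk : 2 ≤ A (n + 1) := by have := A_pos n; have := A_mono n; omega
  have h4 : 2 ≤ A n * A (n + 1) := le_trans hk (Nat.le_mul_of_pos_left _ (A_pos n))
  have h5 : A n ≤ A n * A (n + 1) := Nat.le_mul_of_pos_right _ (by omega)
  omega

lemma A_low : ∀ n, 2 ^ (Nat.fib (n + 4) + 1) ≤ A (n + 4) := by
  have key : ∀ n, (2 ^ (Nat.fib (n + 4) + 1) ≤ A (n + 4)) ∧ (2 ^ (Nat.fib (n + 5) + 1) ≤ A (n + 5)) := by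
    intro n
    induction n with
    | zero => constructor <;> decide
    | succ k ih =>
      obtain ⟨ih1, ih2⟩ := ih
      refine ⟨ih2, ?_⟩
      show 2 ^ (Nat.fib (k + 6) + 1) ≤ A (k + 6)
      have h1 : 2 ^ (Nat.fib (k + 4) + 1) * 2 ^ (Nat.fib (k + 5) + 1) ≤ A (k + 4) * A (k + 5) :=
        Nat.mul_le_mul ih1 ih2
      have h2 : A (k + 4) * A (k + 5) ≤ 2 * A (k + 6) := lower_key (k + 4)
      have h3 : Nat.fib (k + 6) = Nat.fib (k + 4) + Nat.fib (k + 5) := Nat.fib_add_two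
      have h4 : 2 ^ (Nat.fib (k + 4) + 1) * 2 ^ (Nat.fib (k + 5) + 1) = 2 * 2 ^ (Nat.fib (k + 6) + 1) := by
        rw [← pow_add, h3]; ring
      omega
  exact fun n => (key n).1

lemma A_upp : ∀ n, 4 * A (n + 3) ≤ 2 ^ (3 * Nat.fib (n + 3)) := by
  have key : ∀ n, (4 * A (n + 3) ≤ 2 ^ (3 * Nat.fib (n + 3))) ∧ (4 * A (n + 4) ≤ 2 ^ (3 * Nat.fib (n + 4))) := by
    intro n
    induction n with
    | zero => constructor <;> decide
    | succ k ih =>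
      obtain ⟨ih1, ih2⟩ := ih
      refine ⟨ih2, ?_⟩
      show 4 * A (k + 5) ≤ 2 ^ (3 * Nat.fib (k + 5))
      have h1 : (4 * A (k + 3)) * (4 * A (k + 4)) ≤ 2 ^ (3 * Nat.fib (k + 3)) * 2 ^ (3 * Nat.fib (k + 4)) :=
        Nat.mul_le_mul ih1 ih2
      have h2 : A (k + 5) ≤ 3 * (A (k + 3) * A (k + 4)) := upper_key (k + 3)
      have h3 : Nat.fib (k + 5) = Nat.fib (k + 3) + Nat.fib (k + 4) := Nat.fib_add_two
      have h4 : 2 ^ (3 * Nat.fib (k + 3)) * 2 ^ (3 * Nat.fib (k + 4)) = 2 ^ (3 * Nat.fib (k + 5)) := by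
        rw [← pow_add, h3]; ring_nf
      have h5 : (4 * A (k + 3)) * (4 * A (k + 4)) = 16 * (A (k + 3) * A (k + 4)) := by ring
      omega
  exact fun n => (key n).1

lemma gold_le_fib : ∀ n, Real.goldenRatio ^ n ≤ (Nat.fib (n + 2) : ℝ) := by
  have key : ∀ n, (Real.goldenRatio ^ n ≤ (Nat.fib (n + 2) : ℝ)) ∧
      (Real.goldenRatio ^ (n + 1) ≤ (Nat.fib (n + 3) : ℝ)) := by
    intro n
    induction n with
    | zero =>
      refine ⟨by norm_num, ?_⟩
      have h1 : Real.goldenRatio ^ (0 + 1) = Real.goldenRatio := by ring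
      rw [h1, show Nat.fib 3 = 2 by decide]
      have := Real.goldenRatio_lt_two
      norm_num
      linarith
    | succ k ih =>
      obtain ⟨ih1, ih2⟩ := ih
      refine ⟨ih2, ?_⟩
      have hsq : Real.goldenRatio ^ (k + 2) = Real.goldenRatio ^ (k + 1) + Real.goldenRatio ^ k := by
        have : Real.goldenRatio ^ (k + 2) = Real.goldenRatio ^ k * Real.goldenRatio ^ 2 := by ring
        rw [this, Real.goldenRatio_sq]; ring
      have hf : (Nat.fib (k + 4) : ℝ) = (Nat.fib (k + 2) : ℝ) + (Nat.fib (k + 3) : ℝ) := by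
        rw [show Nat.fib (k + 4) = Nat.fib (k + 2) + Nat.fib (k + 3) from Nat.fib_add_two]
        push_cast; ring
      show Real.goldenRatio ^ (k + 2) ≤ (Nat.fib (k + 4) : ℝ)
      rw [hsq, hf]; linarith
  exact fun n => (key n).1

lemma fib_le_gold : ∀ n, (Nat.fib (n + 1) : ℝ) ≤ Real.goldenRatio ^ n := by
  have key : ∀ n, ((Nat.fib (n + 1) : ℝ) ≤ Real.goldenRatio ^ n) ∧
      ((Nat.fib (n + 2) : ℝ) ≤ Real.goldenRatio ^ (n + 1)) := by
    intro n
    induction n with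
    | zero =>
      refine ⟨by norm_num, ?_⟩
      have h1 : Real.goldenRatio ^ (0 + 1) = Real.goldenRatio := by ring
      rw [h1, show Nat.fib 2 = 1 by decide]
      have := Real.one_lt_goldenRatio
      norm_num
      linarith
    | succ k ih =>
      obtain ⟨ih1, ih2⟩ := ih
      refine ⟨ih2, ?_⟩
      have hsq : Real.goldenRatio ^ (k + 2) = Real.goldenRatio ^ (k + 1) + Real.goldenRatio ^ k := by
        have : Real.goldenRatio ^ (k + 2) = Real.goldenRatio ^ k * Real.goldenRatio ^ 2 := by ring
        rw [this, Real.goldenRatio_sq]; ring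
      have hf : (Nat.fib (k + 3) : ℝ) = (Nat.fib (k + 1) : ℝ) + (Nat.fib (k + 2) : ℝ) := by
        rw [show Nat.fib (k + 3) = Nat.fib (k + 1) + Nat.fib (k + 2) from Nat.fib_add_two]
        push_cast; ring
      show (Nat.fib (k + 3) : ℝ) ≤ Real.goldenRatio ^ (k + 2)
      rw [hsq, hf]; linarith
  exact fun n => (key n).1

lemma main_est (n : ℕ) (hn : 5 ≤ n) :
    (((n:ℝ) - 2) * Real.log Real.goldenRatio + Real.log (Real.log 2) ≤ Real.log (Real.log (A n))) ∧
    (Real.log (Real.log (A n)) ≤ (n:ℝ) * Real.log Real.goldenRatio + Real.log 3) := by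
  have hgr1 : (1:ℝ) < Real.goldenRatio := Real.one_lt_goldenRatio
  have hlog2 : (0:ℝ) < Real.log 2 := Real.log_pos (by norm_num)
  have hfA : 2 ^ (Nat.fib n + 1) ≤ A n := by
    obtain ⟨m, rfl⟩ : ∃ m, n = m + 4 := ⟨n - 4, by omega⟩
    exact A_low m
  have hAu : A n ≤ 2 ^ (3 * Nat.fib n) := by
    obtain ⟨m, rfl⟩ : ∃ m, n = m + 3 := ⟨n - 3, by omega⟩
    have := A_upp m
    omega
  have hA1 : (1:ℝ) ≤ (A n : ℝ) := by exact_mod_cast A_pos n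
  have h2f : (2:ℝ) ^ (Nat.fib n) ≤ (A n : ℝ) := by
    have h : (2:ℕ) ^ (Nat.fib n) ≤ A n :=
      le_trans (Nat.pow_le_pow_right (by norm_num) (Nat.le_succ _)) hfA
    exact_mod_cast h
  have hAle : (A n : ℝ) ≤ (2:ℝ) ^ (3 * Nat.fib n) := by exact_mod_cast hAu
  have hL1 : (Nat.fib n : ℝ) * Real.log 2 ≤ Real.log (A n) := by
    have h := Real.log_le_log (by positivity) h2f
    rwa [Real.log_pow] at h
  have hL2 : Real.log (A n) ≤ 3 * (Nat.fib n : ℝ) * Real.log 2 := by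
    have h := Real.log_le_log (by linarith) hAle
    rw [Real.log_pow] at h
    push_cast at h
    linarith
  have hfibpos : 0 < Nat.fib n := Nat.fib_pos.2 (by omega)
  have hFpos : (0:ℝ) < (Nat.fib n : ℝ) := by exact_mod_cast hfibpos
  have hgrf : Real.goldenRatio ^ (n - 2) ≤ (Nat.fib n : ℝ) := by
    have h := gold_le_fib (n - 2)
    rwa [show n - 2 + 2 = n by omega] at h
  have hfgr : (Nat.fib n : ℝ) ≤ Real.goldenRatio ^ n := by
    have h := fib_le_gold (n - 1)
    rw [show n - 1 + 1 = n by omega] at h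
    exact le_trans h (pow_le_pow_right₀ hgr1.le (by omega))
  have hlogF1 : ((n:ℝ) - 2) * Real.log Real.goldenRatio ≤ Real.log (Nat.fib n) := by
    have h := Real.log_le_log (by positivity) hgrf
    rw [Real.log_pow] at h
    have hcast : ((n - 2 : ℕ) : ℝ) = (n:ℝ) - 2 := by
      have h2 : (2:ℕ) ≤ n := by omega
      push_cast [Nat.cast_sub h2]
      ring
    rwa [hcast] at h
  have hlogF2 : Real.log (Nat.fib n) ≤ (n:ℝ) * Real.log Real.goldenRatio := by
    have h := Real.log_le_log hFpos hfgr
    rwa [Real.log_pow] at h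
  have hLpos : 0 < Real.log (A n) := lt_of_lt_of_le (by positivity) hL1
  constructor
  · have h := Real.log_le_log (by positivity) hL1
    rw [Real.log_mul (ne_of_gt hFpos) (ne_of_gt hlog2)] at h
    linarith
  · have hlog2le : Real.log 2 ≤ 1 := by
      have := Real.log_two_lt_d9
      linarith
    have hL3 : Real.log (A n) ≤ 3 * (Nat.fib n : ℝ) := by nlinarith
    have h := Real.log_le_log hLpos hL3
    rw [show (3:ℝ) * (Nat.fib n : ℝ) = 3 * (Nat.fib n : ℝ) from rfl,
      Real.log_mul (by norm_num) (ne_of_gt hFpos)] at h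
    linarith

noncomputable def φ : ℝ := (1 + Real.sqrt 5) / 2

theorem stmt_12 :
    Tendsto (fun n : ℕ => Real.log (Real.log (A n)) / n) atTop
      (nhds (Real.log φ)) := by
  have hφ : φ = Real.goldenRatio := rfl
  rw [hφ]
  have hgr1 : (1:ℝ) < Real.goldenRatio := Real.one_lt_goldenRatio
  have hlgr : 0 < Real.log Real.goldenRatio := Real.log_pos hgr1
  set c1 : ℝ := Real.log (Real.log 2) - 2 * Real.log Real.goldenRatio with hc1
  have hg : Tendsto (fun n : ℕ => Real.log Real.goldenRatio + c1 / n) atTop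
      (nhds (Real.log Real.goldenRatio)) := by
    simpa using (tendsto_const_div_atTop_nhds_zero_nat c1).const_add (Real.log Real.goldenRatio)
  have hh : Tendsto (fun n : ℕ => Real.log Real.goldenRatio + Real.log 3 / n) atTop
      (nhds (Real.log Real.goldenRatio)) := by
    simpa using (tendsto_const_div_atTop_nhds_zero_nat (Real.log 3)).const_add (Real.log Real.goldenRatio)
  refine tendsto_of_tendsto_of_tendsto_of_le_of_le' hg hh ?_ ?_
  · filter_upwards [eventually_ge_atTop 5] with n hn
    have hnR : (5:ℝ) ≤ (n:ℝ) := by exact_mod_cast hn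
    have hn0 : (0:ℝ) < (n:ℝ) := by linarith
    have key := (main_est n hn).1
    have heq : Real.log Real.goldenRatio + c1 / n
        = (((n:ℝ) - 2) * Real.log Real.goldenRatio + Real.log (Real.log 2)) / n := by
      field_simp
      ring
    rw [heq]
    exact div_le_div_of_nonneg_right key hn0.le
  · filter_upwards [eventually_ge_atTop 5] with n hn
    have hnR : (5:ℝ) ≤ (n:ℝ) := by exact_mod_cast hn
    have hn0 : (0:ℝ) < (n:ℝ) := by linarith
    have key := (main_est n hn).2
    have heq : Real.log Real.goldenRatio + Real.log 3 / n
        = ((n:ℝ) * Real.log Real.goldenRatio + Real.log 3) / n := by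
      field_simp
    rw [heq]
    exact div_le_div_of_nonneg_right key hn0.le
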